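/- Let n ≥ 6 be an integer. The cubic g₃(t) := 8(2n−1)(2n−3)(2n−5)·t³ + 12(n−3)(2n−3)(2n−5)·t² + 6(n−3)(n−4)(2n−5)·t + (n−3)(n−4)(n−5) has exactly three real roots t₁ < t₂ < t₃, all lying in the open interval (−1/4, 0), and they interlace with the two roots t̂₁ < t̂₂ of the quadratic q̃(t) := 4(2n−3)(2n−5)·t² + 4(n−4)(2n−5)·t + (n−4)(n−5), namely −1/4 < t₁ < t̂₁ < t₂ < t̂₂ < t₃ < 0, where t̂_{1,2} = −(n−4)/(2(2n−3)) ∓ √(5(n−4)(2n−5))/(2(2n−3)(2n−5)). -/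

import Mathlib

/-- The cubic `g₃(t)`. -/
noncomputable def g3 (n : ℕ) (t : ℝ) : ℝ :=
  8 * (2 * (n : ℝ) - 1) * (2 * (n : ℝ) - 3) * (2 * (n : ℝ) - 5) * t ^ 3 +
  12 * ((n : ℝ) - 3) * (2 * (n : ℝ) - 3) * (2 * (n : ℝ) - 5) * t ^ 2 +
  6 * ((n : ℝ) - 3) * ((n : ℝ) - 4) * (2 * (n : ℝ) - 5) * t +
  ((n : ℝ) - 3) * ((n : ℝ) - 4) * ((n : ℝ) - 5)

/-- The quadratic `q̃(t)`. -/
noncomputable def qt (n : ℕ) (t : ℝ) : ℝ :=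
  4 * (2 * (n : ℝ) - 3) * (2 * (n : ℝ) - 5) * t ^ 2 +
  4 * ((n : ℝ) - 4) * (2 * (n : ℝ) - 5) * t +
  ((n : ℝ) - 4) * ((n : ℝ) - 5)

/-- The smaller root `t̂₁` of `q̃`. -/
noncomputable def that1 (n : ℕ) : ℝ :=
  -(((n : ℝ) - 4) / (2 * (2 * (n : ℝ) - 3))) -
    Real.sqrt (5 * ((n : ℝ) - 4) * (2 * (n : ℝ) - 5)) /
      (2 * (2 * (n : ℝ) - 3) * (2 * (n : ℝ) - 5))

/-- The larger root `t̂₂` of `q̃`. -/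
noncomputable def that2 (n : ℕ) : ℝ :=
  -(((n : ℝ) - 4) / (2 * (2 * (n : ℝ) - 3))) +
    Real.sqrt (5 * ((n : ℝ) - 4) * (2 * (n : ℝ) - 5)) /
      (2 * (2 * (n : ℝ) - 3) * (2 * (n : ℝ) - 5))

lemma cubic_factor (a b c d x1 x2 x3 t : ℝ) (h12 : x1 ≠ x2) (h13 : x1 ≠ x3) (h23 : x2 ≠ x3)
    (e1 : a * x1 ^ 3 + b * x1 ^ 2 + c * x1 + d = 0)
    (e2 : a * x2 ^ 3 + b * x2 ^ 2 + c * x2 + d = 0)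
    (e3 : a * x3 ^ 3 + b * x3 ^ 2 + c * x3 + d = 0) :
    a * t ^ 3 + b * t ^ 2 + c * t + d = a * (t - x1) * (t - x2) * (t - x3) := by
  have h12' : x1 - x2 ≠ 0 := sub_ne_zero.mpr h12
  have h13' : x1 - x3 ≠ 0 := sub_ne_zero.mpr h13
  have h23' : x2 - x3 ≠ 0 := sub_ne_zero.mpr h23
  apply mul_left_cancel₀ (mul_ne_zero (mul_ne_zero h12' h13') h23')
  linear_combination ((x2 - x3) * (t - x2) * (t - x3)) * e1
    - ((x1 - x3) * (t - x1) * (t - x3)) * e2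
    + ((x1 - x2) * (t - x1) * (t - x2)) * e3

lemma abs_helper (a y : ℝ) (h : a ^ 2 < y ^ 2) (hy : 0 < y) : -y < a ∧ a < y := by
  constructor <;> nlinarith

lemma aux_Bneg (m : ℝ) (hm : 6 ≤ m) :
    (-1280*m^5 + 17920*m^4 - 97920*m^3 + 260480*m^2 - 336400*m + 168000 : ℝ) < 0 := by
  have hx6 : (0:ℝ) ≤ m - 6 := by linarith
  have hp2 : (0:ℝ) ≤ (m-6)^2 := by positivity
  have hp3 : (0:ℝ) ≤ (m-6)^3 := by positivity
  have hp4 : (0:ℝ) ≤ (m-6)^4 := by positivity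
  have hp5 : (0:ℝ) ≤ (m-6)^5 := by positivity
  linarith

set_option maxHeartbeats 2000000 in
lemma aux_Qpos (m : ℝ) (hm : 6 ≤ m) :
    (0:ℝ) < (-1280*m^5 + 17920*m^4 - 97920*m^3 + 260480*m^2 - 336400*m + 168000)^2
        * (5 * (m - 4) * (2 * m - 5))
      - (-2560*m^6 + 49920*m^5 - 385280*m^4 + 1517440*m^3 - 3232800*m^2 + 3542000*m - 1560000)^2 := by
  have hx6 : (0:ℝ) ≤ m - 6 := by linarith
  have hp2 : (0:ℝ) ≤ (m-6)^2 := by positivity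
  have hp3 : (0:ℝ) ≤ (m-6)^3 := by positivity
  have hp4 : (0:ℝ) ≤ (m-6)^4 := by positivity
  have hp5 : (0:ℝ) ≤ (m-6)^5 := by positivity
  have hp6 : (0:ℝ) ≤ (m-6)^6 := by positivity
  have hp7 : (0:ℝ) ≤ (m-6)^7 := by positivity
  have hp8 : (0:ℝ) ≤ (m-6)^8 := by positivity
  have hp9 : (0:ℝ) ≤ (m-6)^9 := by positivity
  have hp10 : (0:ℝ) ≤ (m-6)^10 := by positivity
  have hp11 : (0:ℝ) ≤ (m-6)^11 := by positivity
  have hp12 : (0:ℝ) ≤ (m-6)^12 := by positivity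
  linarith

lemma aux_sbound1 (m s : ℝ) (hm : 6 ≤ m) (hs : 0 < s)
    (hs2 : s ^ 2 = 5 * (m - 4) * (2 * m - 5)) : s < 5 * (2 * m - 5) / 2 :=
  (abs_helper s (5 * (2 * m - 5) / 2) (by nlinarith) (by linarith)).2

lemma aux_sbound2 (m s : ℝ) (hm : 6 ≤ m) (hs : 0 < s)
    (hs2 : s ^ 2 = 5 * (m - 4) * (2 * m - 5)) : s < (m - 4) * (2 * m - 5) :=
  (abs_helper s ((m - 4) * (2 * m - 5))
    (by nlinarith [sq_nonneg (m - 6), sq_nonneg ((m - 4) * (2 * m - 5) - 5)])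
    (by nlinarith)).2

set_option maxHeartbeats 1000000 in
theorem stmt16 (n : ℕ) (hn : 6 ≤ n) :
    qt n (that1 n) = 0 ∧ qt n (that2 n) = 0 ∧
    ∃ t1 t2 t3 : ℝ,
      (∀ t : ℝ, g3 n t = 0 ↔ t = t1 ∨ t = t2 ∨ t = t3) ∧
      -(1 / 4) < t1 ∧ t1 < that1 n ∧ that1 n < t2 ∧ t2 < that2 n ∧
      that2 n < t3 ∧ t3 < 0 := by
  obtain ⟨m, hmdef⟩ : ∃ x : ℝ, x = (n : ℝ) := ⟨_, rfl⟩
  have hm : (6 : ℝ) ≤ m := by rw [hmdef]; exact_mod_cast hn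
  have h3 : (0:ℝ) < 2 * m - 3 := by linarith
  have h5 : (0:ℝ) < 2 * m - 5 := by linarith
  have hsarg : (0:ℝ) < 5 * (m - 4) * (2 * m - 5) :=
    mul_pos (mul_pos (by norm_num) (by linarith)) h5
  obtain ⟨s, hsdef⟩ : ∃ x : ℝ, x = Real.sqrt (5 * (m - 4) * (2 * m - 5)) := ⟨_, rfl⟩
  have hs : 0 < s := hsdef ▸ Real.sqrt_pos.mpr hsarg
  have hs2 : s ^ 2 = 5 * (m - 4) * (2 * m - 5) := hsdef ▸ Real.sq_sqrt hsarg.le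
  have hD : (0:ℝ) < 2 * (2 * m - 3) * (2 * m - 5) :=
    mul_pos (mul_pos (by norm_num) h3) h5
  have hth1 : that1 n = (-((m - 4) * (2 * m - 5)) - s) / (2 * (2 * m - 3) * (2 * m - 5)) := by
    unfold that1
    rw [← hmdef, ← hsdef]
    have e1 : ((m:ℝ) - 4) / (2 * (2 * m - 3)) = (m - 4) * (2 * m - 5) / (2 * (2 * m - 3) * (2 * m - 5)) := by
      rw [mul_div_mul_right _ _ h5.ne']
    rw [e1, ← neg_div, div_sub_div_same]
  have hth2 : that2 n = (-((m - 4) * (2 * m - 5)) + s) / (2 * (2 * m - 3) * (2 * m - 5)) := by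
    unfold that2
    rw [← hmdef, ← hsdef]
    have e1 : ((m:ℝ) - 4) / (2 * (2 * m - 3)) = (m - 4) * (2 * m - 5) / (2 * (2 * m - 3) * (2 * m - 5)) := by
      rw [mul_div_mul_right _ _ h5.ne']
    rw [e1, ← neg_div, ← add_div]
  have hq1 : qt n (that1 n) = 0 := by
    have h : qt n (that1 n) = (4 * (2 * m - 3) * (2 * m - 5)) *
        (s ^ 2 - 5 * (m - 4) * (2 * m - 5)) / (2 * (2 * m - 3) * (2 * m - 5)) ^ 2 := by
      rw [hth1]; unfold qt; rw [← hmdef]; field_simp; ring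
    rw [h, hs2]; ring
  have hq2 : qt n (that2 n) = 0 := by
    have h : qt n (that2 n) = (4 * (2 * m - 3) * (2 * m - 5)) *
        (s ^ 2 - 5 * (m - 4) * (2 * m - 5)) / (2 * (2 * m - 3) * (2 * m - 5)) ^ 2 := by
      rw [hth2]; unfold qt; rw [← hmdef]; field_simp; ring
    rw [h, hs2]; ring
  obtain ⟨A, hAdef⟩ : ∃ x : ℝ, x = -2560*m^6 + 49920*m^5 - 385280*m^4 + 1517440*m^3
      - 3232800*m^2 + 3542000*m - 1560000 := ⟨_, rfl⟩
  obtain ⟨B, hBdef⟩ : ∃ x : ℝ, x = -1280*m^5 + 17920*m^4 - 97920*m^3 + 260480*m^2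
      - 336400*m + 168000 := ⟨_, rfl⟩
  have hg1 : g3 n (that1 n) = (A - B * s) / (2 * (2 * m - 3) * (2 * m - 5)) ^ 3 := by
    have h : g3 n (that1 n) = ((A - B * s) +
        ((960*m^3 - 6240*m^2 + 13200*m - 9000) + (-64*m^3 + 288*m^2 - 368*m + 120) * s) *
          (s ^ 2 - 5 * (m - 4) * (2 * m - 5))) / (2 * (2 * m - 3) * (2 * m - 5)) ^ 3 := by
      rw [hth1]; unfold g3; rw [← hmdef, hAdef, hBdef]; field_simp; ring
    rw [h, hs2]; ring_nf
  have hg2 : g3 n (that2 n) = (A + B * s) / (2 * (2 * m - 3) * (2 * m - 5)) ^ 3 := by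
    have h : g3 n (that2 n) = ((A + B * s) +
        ((960*m^3 - 6240*m^2 + 13200*m - 9000) + (64*m^3 - 288*m^2 + 368*m - 120) * s) *
          (s ^ 2 - 5 * (m - 4) * (2 * m - 5))) / (2 * (2 * m - 3) * (2 * m - 5)) ^ 3 := by
      rw [hth2]; unfold g3; rw [← hmdef, hAdef, hBdef]; field_simp; ring
    rw [h, hs2]; ring_nf
  have hBneg : B < 0 := hBdef ▸ aux_Bneg m hm
  have hQpos : 0 < B ^ 2 * (5 * (m - 4) * (2 * m - 5)) - A ^ 2 := by
    rw [hAdef, hBdef]; exact aux_Qpos m hm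
  have hmul : 0 < (-B) * s := mul_pos (neg_pos.mpr hBneg) hs
  have habs : A ^ 2 < ((-B) * s) ^ 2 := by
    have h : ((-B) * s) ^ 2 = B ^ 2 * s ^ 2 := by ring
    rw [h, hs2]; linarith
  obtain ⟨k2, k1⟩ := abs_helper A ((-B) * s) habs hmul
  have key1 : 0 < A - B * s := by linarith
  have key2 : A + B * s < 0 := by linarith
  have hgpos1 : 0 < g3 n (that1 n) := by
    rw [hg1]; exact div_pos key1 (pow_pos hD 3)
  have hgneg2 : g3 n (that2 n) < 0 := by
    rw [hg2]; exact div_neg_of_neg_of_pos key2 (pow_pos hD 3)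
  have h0a : g3 n (-(1/4) : ℝ) = -(15/8) := by unfold g3; rw [← hmdef]; ring
  have h0b : 0 < g3 n 0 := by
    have h : g3 n 0 = (m - 3) * (m - 4) * (m - 5) := by unfold g3; rw [← hmdef]; ring
    rw [h]; exact mul_pos (mul_pos (by linarith) (by linarith)) (by linarith)
  have o1 : -(1/4 : ℝ) < that1 n := by
    rw [hth1, lt_div_iff₀ hD]
    have := aux_sbound1 m s hm hs hs2
    nlinarith [this]
  have o2 : that1 n < that2 n := by
    rw [hth1, hth2, div_lt_div_iff₀ hD hD]
    nlinarith [mul_pos hs hD]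
  have o3 : that2 n < 0 := by
    rw [hth2, div_lt_iff₀ hD]
    have := aux_sbound2 m s hm hs hs2
    nlinarith [this]
  have hc : Continuous (g3 n) := by unfold g3; fun_prop
  obtain ⟨t1, ht1mem, hgt1⟩ :=
    intermediate_value_Ioo (le_of_lt o1) hc.continuousOn
      (Set.mem_Ioo.mpr ⟨by rw [h0a]; norm_num, hgpos1⟩)
  obtain ⟨t2, ht2mem, hgt2⟩ :=
    intermediate_value_Ioo' (le_of_lt o2) hc.continuousOn
      (Set.mem_Ioo.mpr ⟨hgneg2, hgpos1⟩)
  obtain ⟨t3, ht3mem, hgt3⟩ :=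
    intermediate_value_Ioo (le_of_lt o3) hc.continuousOn
      (Set.mem_Ioo.mpr ⟨hgneg2, h0b⟩)
  obtain ⟨ht1l, ht1r⟩ := Set.mem_Ioo.mp ht1mem
  obtain ⟨ht2l, ht2r⟩ := Set.mem_Ioo.mp ht2mem
  obtain ⟨ht3l, ht3r⟩ := Set.mem_Ioo.mp ht3mem
  refine ⟨hq1, hq2, t1, t2, t3, ?_, ht1l, ht1r, ht2l, ht2r, ht3l, ht3r⟩
  have h12 : t1 ≠ t2 := by linarith
  have h13 : t1 ≠ t3 := by linarith
  have h23 : t2 ≠ t3 := by linarith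
  have ha : (8 * (2 * m - 1) * (2 * m - 3) * (2 * m - 5)) ≠ 0 :=
    ne_of_gt (mul_pos (mul_pos (mul_pos (by norm_num) (by linarith)) h3) h5)
  have hshape : ∀ x : ℝ, g3 n x =
      8 * (2 * m - 1) * (2 * m - 3) * (2 * m - 5) * x ^ 3 +
      12 * (m - 3) * (2 * m - 3) * (2 * m - 5) * x ^ 2 +
      6 * (m - 3) * (m - 4) * (2 * m - 5) * x +
      (m - 3) * (m - 4) * (m - 5) := by
    intro x; unfold g3; rw [← hmdef]
  have e1 := hgt1; rw [hshape t1] at e1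
  have e2 := hgt2; rw [hshape t2] at e2
  have e3 := hgt3; rw [hshape t3] at e3
  have hfact : ∀ t : ℝ, g3 n t =
      8 * (2 * m - 1) * (2 * m - 3) * (2 * m - 5) * (t - t1) * (t - t2) * (t - t3) := by
    intro t
    rw [hshape t]
    exact cubic_factor _ _ _ _ _ _ _ t h12 h13 h23 e1 e2 e3
  intro t
  constructor
  · intro h
    have hft := hfact t
    rw [h] at hft
    have hz : (8 * (2 * m - 1) * (2 * m - 3) * (2 * m - 5) * (t - t1) * (t - t2)) * (t - t3) = 0 := by
      linarith
    rcases mul_eq_zero.mp hz with hz | hz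
    · rcases mul_eq_zero.mp hz with hz | hz
      · rcases mul_eq_zero.mp hz with hz | hz
        · exact absurd hz ha
        · exact Or.inl (sub_eq_zero.mp hz)
      · exact Or.inr (Or.inl (sub_eq_zero.mp hz))
    · exact Or.inr (Or.inr (sub_eq_zero.mp hz))
  · rintro (rfl | rfl | rfl) <;> assumption
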